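/- Let $g:\mathbb{R}^3\times\mathbb{R}\to\mathbb{R}$ be measurable with support contained in $B_{1/2}(0)\times(-1/4,1/4)$, integrable, and suppose there exists $\delta\in(0,1)$ with $\|g\|_\delta := \sup_{r>0,\ (\bar x,t)\in\mathbb{R}^3\times\mathbb{R}} r^{\delta-5}\int_{t-r^2}^{t+r^2}\int_{B_r(\bar x)}|g|\,dy\,ds < \infty$. Then for every $(x,t)\in\mathbb{R}^3\times\mathbb{R}$ one has $\int_{-\infty}^{\infty}\int_{\mathbb{R}^3} \frac{|g(y,s)|}{(|x-y|^2+|t-s|)^2}\,dy\,ds \le \max\big(C(\delta)\|g\|_\delta,\ 16\int_{-1/4}^{1/4}\int_{B_{1/2}(0)}|g|\,dy\,ds\big)$ for some constant $C(\delta)$ depending only on $\delta$. -/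

import Mathlib

open MeasureTheory Metric Set

noncomputable section

/-- **Parabolic Morrey bound implies boundedness of the singular integral.**
If `g` is measurable, integrable, supported in `B_{1/2}(0) × (-1/4,1/4)`, and satisfies the
(two-sided-in-time) parabolic Morrey bound with exponent `δ ∈ (0,1)` and constant `K`, then
for every `(x,t)` one has
`∫∫ |g(y,s)| / (|x-y|² + |t-s|)² ≤ max (C(δ) K) (16 ∫∫_{B_{1/2}×(-1/4,1/4)} |g|)`
for a constant `C(δ)` depending only on `δ`. -/
theorem stmt_0 (δ : ℝ) (hδ : δ ∈ Set.Ioo (0:ℝ) 1) :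
    ∃ C : ℝ, 0 < C ∧
      ∀ g : (EuclideanSpace ℝ (Fin 3)) × ℝ → ℝ, Measurable g →
        (Function.support g ⊆ (ball (0 : EuclideanSpace ℝ (Fin 3)) (1/2)) ×ˢ
          Ioo (-(1/4) : ℝ) (1/4)) →
        Integrable g →
        ∀ K : ℝ,
          (∀ r : ℝ, 0 < r → ∀ (xc : EuclideanSpace ℝ (Fin 3)) (t : ℝ),
            r ^ (δ - 5) *
              ∫ p in (ball xc r) ×ˢ Ioo (t - r^2) (t + r^2), |g p| ≤ K) →
        ∀ (x : EuclideanSpace ℝ (Fin 3)) (t : ℝ),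
          ∫ p : (EuclideanSpace ℝ (Fin 3)) × ℝ,
              |g p| / (‖x - p.1‖^2 + |t - p.2|)^2
            ≤ max (C * K)
              (16 * ∫ p in (ball (0 : EuclideanSpace ℝ (Fin 3)) (1/2)) ×ˢ
                  Ioo (-(1/4) : ℝ) (1/4), |g p|) := by
  obtain ⟨hδ0, hδ1⟩ := hδ
  set q : ℝ := (8:ℝ) ^ ((δ - 1)/2) with hq_def
  have hq0 : 0 < q := Real.rpow_pos_of_pos (by norm_num) _
  have hq1 : q < 1 := Real.rpow_lt_one_of_one_lt_of_neg (by norm_num) (by linarith)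
  have h1q : 0 < 1 - q := by linarith
  refine ⟨1 + 2048 * (1 - q)⁻¹, by positivity, ?_⟩
  intro g hg hsupp hint K hK x t
  -- K is nonnegative
  have hK0 : 0 ≤ K := by
    have h := hK 1 one_pos 0 0
    have h2 : (0:ℝ) ≤ (1:ℝ) ^ (δ - 5) *
        ∫ p in (ball (0:EuclideanSpace ℝ (Fin 3)) 1) ×ˢ Ioo ((0:ℝ) - 1^2) (0 + 1^2), |g p| :=
      mul_nonneg (Real.rpow_nonneg (by norm_num) _) (integral_nonneg fun p => abs_nonneg _)
    linarith
  -- Morrey bound in ℝ≥0∞ form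
  have morrey : ∀ r : ℝ, 0 < r → ∀ (xc : EuclideanSpace ℝ (Fin 3)) (tc : ℝ),
      ∫⁻ p in (ball xc r) ×ˢ Ioo (tc - r^2) (tc + r^2), ENNReal.ofReal |g p|
        ≤ ENNReal.ofReal (K * r ^ (5 - δ)) := by
    intro r hr xc tc
    have hInt : Integrable (fun p => |g p|)
        (volume.restrict ((ball xc r) ×ˢ Ioo (tc - r^2) (tc + r^2))) :=
      hint.abs.integrableOn
    rw [← MeasureTheory.ofReal_integral_eq_lintegral_ofReal hInt
      (Filter.Eventually.of_forall fun p => abs_nonneg _)]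
    apply ENNReal.ofReal_le_ofReal
    have h := hK r hr xc tc
    have hrp : 0 < r ^ (δ - 5) := Real.rpow_pos_of_pos hr _
    have hinv : r ^ (5 - δ) = (r ^ (δ - 5))⁻¹ := by
      rw [show (5 - δ) = -(δ - 5) by ring, Real.rpow_neg hr.le]
    rw [hinv, ← div_eq_mul_inv]
    exact (le_div_iff₀' hrp).2 h
  -- total mass bound from the support
  have hsubS : (ball (0:EuclideanSpace ℝ (Fin 3)) (1/2)) ×ˢ Ioo (-(1/4):ℝ) (1/4) ⊆
      (ball (0:EuclideanSpace ℝ (Fin 3)) 1) ×ˢ Ioo ((0:ℝ) - 1^2) (0 + 1^2) := by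
    apply Set.prod_mono (ball_subset_ball (by norm_num))
    intro s hs
    simp only [mem_Ioo] at hs ⊢
    constructor <;> nlinarith [hs.1, hs.2]
  have hglobal : ∫⁻ p, ENNReal.ofReal |g p| ≤ ENNReal.ofReal K := by
    have hsuppF : Function.support (fun p => ENNReal.ofReal |g p|) ⊆
        (ball (0:EuclideanSpace ℝ (Fin 3)) 1) ×ˢ Ioo ((0:ℝ) - 1^2) (0 + 1^2) := by
      intro p hp
      apply hsubS
      apply hsupp
      simp only [Function.mem_support, ne_eq, ENNReal.ofReal_eq_zero, not_le] at hp
      simpa [Function.mem_support] using (abs_pos.mp hp)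
    have heq : ∫⁻ p, ENNReal.ofReal |g p| =
        ∫⁻ p in (ball (0:EuclideanSpace ℝ (Fin 3)) 1) ×ˢ Ioo ((0:ℝ) - 1^2) (0 + 1^2),
          ENNReal.ofReal |g p| := by
      rw [← lintegral_indicator (by
        exact measurableSet_ball.prod measurableSet_Ioo),
        Set.indicator_eq_self.2 hsuppF]
    rw [heq]
    calc _ ≤ ENNReal.ofReal (K * (1:ℝ) ^ (5 - δ)) := morrey 1 one_pos 0 0
      _ = ENNReal.ofReal K := by rw [Real.one_rpow, mul_one]
  -- the kernel distance function
  set Q : (EuclideanSpace ℝ (Fin 3)) × ℝ → ℝ := fun p => ‖x - p.1‖^2 + |t - p.2| with hQdef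
  have hQ0 : ∀ p, 0 ≤ Q p := fun p => add_nonneg (sq_nonneg _) (abs_nonneg _)
  have hQc : Continuous Q := by
    apply Continuous.add
    · exact ((continuous_const.sub continuous_fst).norm.pow 2)
    · exact (continuous_const.sub continuous_snd).abs
  set F : (EuclideanSpace ℝ (Fin 3)) × ℝ → ENNReal :=
    fun p => ENNReal.ofReal (|g p| / (Q p)^2) with hFdef
  have hFm : Measurable F :=
    (hg.abs.div ((hQc.measurable).pow_const 2)).ennreal_ofReal
  -- dyadic annuli
  set s : ℕ → ℝ := fun k => (8:ℝ)⁻¹ ^ k with hs_def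
  have hs0 : ∀ k, 0 < s k := fun k => pow_pos (by norm_num) k
  have hsk : ∀ k : ℕ, s k = (8:ℝ) ^ (-(k:ℝ)) := by
    intro k
    show (8:ℝ)⁻¹ ^ k = _
    rw [inv_pow, Real.rpow_neg (by norm_num), Real.rpow_natCast]
  set A : ℕ → Set ((EuclideanSpace ℝ (Fin 3)) × ℝ) :=
    fun k => Q ⁻¹' (Ioc (s (k+1)) (s k)) with hA_def
  set B : Set ((EuclideanSpace ℝ (Fin 3)) × ℝ) := Q ⁻¹' (Ioi 1) with hB_def
  have hAm : ∀ k, MeasurableSet (A k) := fun k => hQc.measurable measurableSet_Ioc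
  have hBm : MeasurableSet B := hQc.measurable measurableSet_Ioi
  -- pointwise cover
  have hcover : ∀ p, F p ≤ B.indicator F p + ∑' k, (A k).indicator F p := by
    intro p
    rcases eq_or_lt_of_le (hQ0 p) with h0 | h0
    · have : F p = 0 := by simp [hFdef, ← h0]
      rw [this]; exact zero_le
    · by_cases hB1 : 1 < Q p
      · rw [Set.indicator_of_mem (show p ∈ B from hB1) F]
        exact le_self_add
      · push_neg at hB1
        have hex : ∃ n : ℕ, s (n+1) < Q p := by
          obtain ⟨n, hn⟩ := exists_pow_lt_of_lt_one h0 (by norm_num : (8:ℝ)⁻¹ < 1)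
          exact ⟨n, lt_of_le_of_lt
            (pow_le_pow_of_le_one (by norm_num) (by norm_num) (Nat.le_succ n)) hn⟩
        obtain ⟨k, hk⟩ : ∃ k, p ∈ A k := by
          refine ⟨Nat.find hex, Nat.find_spec hex, ?_⟩
          rcases Nat.eq_zero_or_pos (Nat.find hex) with h | h
          · rw [h]; simpa [hs_def] using hB1
          · obtain ⟨m, hm⟩ := Nat.exists_eq_succ_of_ne_zero h.ne'
            rw [hm]
            have := Nat.find_min hex (by omega : m < Nat.find hex)
            push_neg at this
            simpa using this
        calc F p = (A k).indicator F p := (Set.indicator_of_mem hk F).symm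
          _ ≤ ∑' j, (A j).indicator F p := ENNReal.le_tsum k
          _ ≤ _ := le_add_self
  have hsplit : ∫⁻ p, F p ≤ (∫⁻ p, B.indicator F p) + ∑' k, ∫⁻ p, (A k).indicator F p := by
    calc ∫⁻ p, F p ≤ ∫⁻ p, (B.indicator F p + ∑' k, (A k).indicator F p) :=
          lintegral_mono hcover
      _ = _ := by
          rw [lintegral_add_left (hFm.indicator hBm),
            lintegral_tsum (fun k => (hFm.indicator (hAm k)).aemeasurable)]
  -- far region
  have hBterm : ∫⁻ p, B.indicator F p ≤ ENNReal.ofReal K := by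
    refine le_trans (lintegral_mono fun p => ?_) hglobal
    by_cases hp : p ∈ B
    · rw [Set.indicator_of_mem hp]
      apply ENNReal.ofReal_le_ofReal
      apply div_le_self (abs_nonneg _)
      have h1 : 1 < Q p := hp
      nlinarith [hQ0 p]
    · rw [Set.indicator_of_notMem hp]; exact zero_le
  -- annulus terms
  have hAterm : ∀ k, ∫⁻ p, (A k).indicator F p ≤ ENNReal.ofReal (K * (2048 * q ^ k)) := by
    intro k
    set r : ℝ := 2 * (8:ℝ) ^ (-(k:ℝ)/2) with hr_def
    have h8 : (0:ℝ) < (8:ℝ) ^ (-(k:ℝ)/2) := Real.rpow_pos_of_pos (by norm_num) _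
    have hrpos : 0 < r := by positivity
    have hr2 : r^2 = 4 * (8:ℝ)^(-(k:ℝ)) := by
      rw [hr_def, mul_pow, ← Real.rpow_natCast ((8:ℝ)^(-(k:ℝ)/2)) 2,
        ← Real.rpow_mul (by norm_num)]
      norm_num
    have hsub : A k ⊆ (ball x r) ×ˢ Ioo (t - r^2) (t + r^2) := by
      rintro p hp
      obtain ⟨hp1, hp2⟩ := (show s (k+1) < Q p ∧ Q p ≤ s k from hp)
      have hn2 : ‖x - p.1‖^2 ≤ s k :=
        le_trans (le_add_of_nonneg_right (abs_nonneg _)) hp2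
      have ht2 : |t - p.2| ≤ s k :=
        le_trans (le_add_of_nonneg_left (sq_nonneg _)) hp2
      have hrsq : s k < r^2 := by
        rw [hr2, hsk k]
        nlinarith [Real.rpow_pos_of_pos (show (0:ℝ) < 8 by norm_num) (-(k:ℝ))]
      constructor
      · rw [mem_ball, dist_eq_norm, norm_sub_rev]
        nlinarith [norm_nonneg (x - p.1)]
      · have habs := abs_lt.1 (lt_of_le_of_lt ht2 hrsq)
        exact ⟨by linarith [habs.1], by linarith [habs.2]⟩
    have hc0 : 0 < (s (k+1))^2 := pow_pos (hs0 _) 2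
    calc ∫⁻ p, (A k).indicator F p = ∫⁻ p in A k, F p := lintegral_indicator (hAm k) F
      _ ≤ ∫⁻ p in A k, ENNReal.ofReal (((s (k+1))^2)⁻¹ * |g p|) := by
          apply setLIntegral_mono ((hg.abs.const_mul _).ennreal_ofReal)
          intro p hp
          apply ENNReal.ofReal_le_ofReal
          rw [inv_mul_eq_div]
          apply div_le_div_of_nonneg_left (abs_nonneg _) hc0
          exact pow_le_pow_left₀ (hs0 _).le (le_of_lt hp.1) 2
      _ ≤ ∫⁻ p in (ball x r) ×ˢ Ioo (t - r^2) (t + r^2),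
            ENNReal.ofReal (((s (k+1))^2)⁻¹ * |g p|) := lintegral_mono_set hsub
      _ = ENNReal.ofReal (((s (k+1))^2)⁻¹) *
            ∫⁻ p in (ball x r) ×ˢ Ioo (t - r^2) (t + r^2), ENNReal.ofReal |g p| := by
          simp_rw [ENNReal.ofReal_mul (by positivity : (0:ℝ) ≤ ((s (k+1))^2)⁻¹)]
          exact lintegral_const_mul' _ _ ENNReal.ofReal_ne_top
      _ ≤ ENNReal.ofReal (((s (k+1))^2)⁻¹) * ENNReal.ofReal (K * r ^ (5 - δ)) :=
          mul_le_mul_right (morrey r hrpos x t) _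
      _ = ENNReal.ofReal (((s (k+1))^2)⁻¹ * (K * r ^ (5 - δ))) :=
          (ENNReal.ofReal_mul (by positivity)).symm
      _ ≤ ENNReal.ofReal (K * (2048 * q ^ k)) := by
          apply ENNReal.ofReal_le_ofReal
          -- algebra
          have hc : ((s (k+1))^2)⁻¹ = (8:ℝ) ^ (2*(k:ℝ)+2) := by
            rw [hsk (k+1), ← Real.rpow_natCast ((8:ℝ)^(-((k:ℕ)+1:ℕ):ℝ)) 2,
              ← Real.rpow_mul (by norm_num), ← Real.rpow_neg (by norm_num)]
            push_cast
            ring_nf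
          have hr5 : r ^ (5-δ) = (2:ℝ)^(5-δ) * (8:ℝ)^((-(k:ℝ)/2)*(5-δ)) := by
            rw [hr_def, Real.mul_rpow (by norm_num) h8.le, ← Real.rpow_mul (by norm_num)]
          have hqk : q ^ k = (8:ℝ)^((δ-1)/2*(k:ℝ)) := by
            rw [hq_def, ← Real.rpow_natCast ((8:ℝ)^((δ-1)/2)) k,
              ← Real.rpow_mul (by norm_num)]
          have hE : (8:ℝ)^(2*(k:ℝ)+2) * (8:ℝ)^((-(k:ℝ)/2)*(5-δ)) =
              64 * (8:ℝ)^((δ-1)/2*(k:ℝ)) := by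
            rw [← Real.rpow_add (by norm_num : (0:ℝ) < 8),
              show 2*(k:ℝ)+2 + (-(k:ℝ)/2)*(5-δ) = 2 + (δ-1)/2*(k:ℝ) by ring,
              Real.rpow_add (by norm_num : (0:ℝ) < 8),
              show (8:ℝ)^(2:ℝ) = 64 by
                rw [show (2:ℝ) = ((2:ℕ):ℝ) by norm_num, Real.rpow_natCast]; norm_num]
          have h2 : (2:ℝ)^(5-δ) ≤ 32 := by
            calc (2:ℝ)^(5-δ) ≤ (2:ℝ)^(5:ℝ) :=
                Real.rpow_le_rpow_of_exponent_le one_le_two (by linarith)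
              _ = 32 := by
                rw [show (5:ℝ) = ((5:ℕ):ℝ) by norm_num, Real.rpow_natCast]; norm_num
          rw [hc, hr5, hqk]
          have hrear : (8:ℝ)^(2*(k:ℝ)+2) * (K * ((2:ℝ)^(5-δ) * (8:ℝ)^((-(k:ℝ)/2)*(5-δ))))
              = K * (2:ℝ)^(5-δ) * ((8:ℝ)^(2*(k:ℝ)+2) * (8:ℝ)^((-(k:ℝ)/2)*(5-δ))) := by
            ring
          rw [hrear, hE]
          have hX : (0:ℝ) < (8:ℝ)^((δ-1)/2*(k:ℝ)) := Real.rpow_pos_of_pos (by norm_num) _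
          have hP : (0:ℝ) ≤ (2:ℝ)^(5-δ) := Real.rpow_nonneg (by norm_num) _
          nlinarith [mul_nonneg hK0 hX.le]
  -- sum the annulus terms
  have hsum : ∑' k, ∫⁻ p, (A k).indicator F p ≤ ENNReal.ofReal (K * 2048 * (1-q)⁻¹) := by
    have hsm : Summable (fun k : ℕ => K * (2048 * q ^ k)) := by
      simp_rw [← mul_assoc]
      exact (summable_geometric_of_lt_one hq0.le hq1).mul_left (K * 2048)
    calc ∑' k, ∫⁻ p, (A k).indicator F p
        ≤ ∑' k, ENNReal.ofReal (K * (2048 * q^k)) := ENNReal.tsum_le_tsum hAterm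
      _ = ENNReal.ofReal (∑' k, K * (2048 * q^k)) :=
          (ENNReal.ofReal_tsum_of_nonneg (fun k => by positivity) hsm).symm
      _ = ENNReal.ofReal (K * 2048 * (1-q)⁻¹) := by
          congr 1
          simp_rw [← mul_assoc]
          rw [tsum_mul_left, tsum_geometric_of_lt_one hq0.le hq1]
  -- put the pieces together
  have hfinal : ∫⁻ p, F p ≤ ENNReal.ofReal ((1 + 2048*(1-q)⁻¹) * K) := by
    calc ∫⁻ p, F p ≤ ENNReal.ofReal K + ENNReal.ofReal (K*2048*(1-q)⁻¹) :=
          le_trans hsplit (add_le_add hBterm hsum)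
      _ = ENNReal.ofReal (K + K*2048*(1-q)⁻¹) :=
          (ENNReal.ofReal_add hK0 (by positivity)).symm
      _ = _ := by congr 1; ring
  have hnn : 0 ≤ᵐ[(volume : Measure ((EuclideanSpace ℝ (Fin 3)) × ℝ))]
      fun p => |g p| / (Q p)^2 :=
    Filter.Eventually.of_forall fun p => div_nonneg (abs_nonneg _) (sq_nonneg _)
  have hmeas : AEStronglyMeasurable (fun p => |g p| / (Q p)^2)
      (volume : Measure ((EuclideanSpace ℝ (Fin 3)) × ℝ)) :=
    (hg.abs.div ((hQc.measurable).pow_const 2)).aestronglyMeasurable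
  refine le_trans ?_ (le_max_left _ _)
  rw [show (fun p : (EuclideanSpace ℝ (Fin 3)) × ℝ =>
    |g p| / (‖x - p.1‖^2 + |t - p.2|)^2) = fun p => |g p| / (Q p)^2 from rfl]
  rw [integral_eq_lintegral_of_nonneg_ae hnn hmeas]
  exact ENNReal.toReal_le_of_le_ofReal (by positivity) hfinal
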